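/- Let 0 < ρ < 1 and let ε = ε_Λ(√(ρ(1−ρ)/(1+ρ))) be the flatness factor of Λ at parameter √(ρ(1−ρ)/(1+ρ)). If ε < 1/2, then for all x, y ∈ ℝ the mixture density f_{X̄,Ȳ} is sandwiched by the bivariate Gaussian density: (1 − 2ε)·f_{X,Y}(x,y) ≤ f_{X̄,Ȳ}(x,y) ≤ (1 + 4ε)·f_{X,Y}(x,y). -/

import Mathlib

open Real

/-- The centered Gaussian density with standard deviation `σ`. -/
noncomputable def gpdf (σ x : ℝ) : ℝ :=
  (1 / (Real.sqrt (2 * Real.pi) * σ)) * Real.exp (-(x ^ 2) / (2 * σ ^ 2))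

/-- The discrete Gaussian distribution over the lattice `Λ = bℤ` with parameter `σ`,
evaluated at the lattice point `b * k`. -/
noncomputable def dgauss (b σ : ℝ) (k : ℤ) : ℝ :=
  gpdf σ (b * k) / ∑' j : ℤ, gpdf σ (b * j)

/-- The flatness factor of the lattice `Λ = bℤ` at parameter `σ`. -/
noncomputable def flatness (b σ : ℝ) : ℝ :=
  ⨆ x : ℝ, |b * (∑' k : ℤ, gpdf σ (x - b * k)) - 1|

/-- The bivariate Gaussian density with unit variances and correlation `ρ`. -/
noncomputable def fXY (ρ x y : ℝ) : ℝ :=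
  (1 / (2 * Real.pi * Real.sqrt (1 - ρ ^ 2))) *
    Real.exp (-(x ^ 2 + y ^ 2 - 2 * ρ * x * y) / (2 * (1 - ρ ^ 2)))

/-- The density of `(W̄ + √(1-ρ)N₁, W̄ + √(1-ρ)N₂)` where `W̄ ~ D_{Λ,√ρ}`, `Λ = bℤ`. -/
noncomputable def fXbarYbar (ρ b x y : ℝ) : ℝ :=
  ∑' k : ℤ, dgauss b (Real.sqrt ρ) k * gpdf (Real.sqrt (1 - ρ)) (x - b * k) *
    gpdf (Real.sqrt (1 - ρ)) (y - b * k)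


section helper

open MeasureTheory Filter

lemma gpdf_nonneg {σ : ℝ} (hσ : 0 ≤ σ) (x : ℝ) : 0 ≤ gpdf σ x := by
  unfold gpdf; positivity

lemma gpdf_pos {σ : ℝ} (hσ : 0 < σ) (x : ℝ) : 0 < gpdf σ x := by
  unfold gpdf
  have := Real.pi_pos
  positivity

lemma gpdf_neg (σ x : ℝ) : gpdf σ (-x) = gpdf σ x := by simp [gpdf]

lemma gpdf_anti {σ : ℝ} (hσ : 0 < σ) {x y : ℝ} (h : |x| ≤ |y|) : gpdf σ y ≤ gpdf σ x := by
  have habs : x ^ 2 ≤ y ^ 2 := by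
    rw [← sq_abs x, ← sq_abs y]
    exact pow_le_pow_left₀ (abs_nonneg x) h 2
  have h2 : -(y^2)/(2*σ^2) ≤ -(x^2)/(2*σ^2) :=
    div_le_div_of_nonneg_right (by linarith) (by positivity) |>.trans_eq rfl
  exact mul_le_mul_of_nonneg_left (Real.exp_le_exp.mpr h2) (by positivity)

lemma summable_gpdf_nat {σ c d : ℝ} (hσ : 0 < σ) (hd : d ≠ 0) :
    Summable fun n : ℕ => gpdf σ (c + d * n) := by
  apply summable_of_ratio_test_tendsto_lt_one (l := 0) one_pos ?_ ?_
  · exact Eventually.of_forall fun n => (gpdf_pos hσ _).ne'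
  · have key : ∀ n : ℕ, ‖gpdf σ (c + d * (n+1 : ℕ))‖ / ‖gpdf σ (c + d * n)‖
        = Real.exp (-((2*c*d + d^2) / (2*σ^2))) * Real.exp (-(d^2/σ^2)) ^ n := by
      intro n
      simp only [Real.norm_eq_abs]
      rw [abs_of_nonneg (gpdf_nonneg hσ.le _), abs_of_nonneg (gpdf_nonneg hσ.le _)]
      unfold gpdf
      rw [mul_div_mul_left _ _ (by positivity), ← Real.exp_sub, ← Real.exp_nat_mul,
        ← Real.exp_add]
      congr 1
      push_cast
      field_simp
      ring
    rw [show (0:ℝ) = Real.exp (-((2*c*d + d^2) / (2*σ^2))) * 0 by ring]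
    refine (Filter.Tendsto.congr (fun n => (key n).symm)) ?_
    refine Filter.Tendsto.const_mul _ (tendsto_pow_atTop_nhds_zero_of_lt_one (Real.exp_nonneg _) ?_)
    rw [Real.exp_lt_one_iff]
    have : 0 < d^2/σ^2 := by positivity
    linarith

lemma summable_gpdf_int {σ b : ℝ} (hσ : 0 < σ) (hb : 0 < b) (x : ℝ) :
    Summable fun k : ℤ => gpdf σ (x - b * k) := by
  apply Summable.of_nat_of_neg
  · exact (summable_gpdf_nat (c := x) (d := -b) hσ (neg_ne_zero.mpr hb.ne')).congr
      fun n => by congr 1; push_cast; ring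
  · exact (summable_gpdf_nat (c := x) (d := b) hσ hb.ne').congr
      fun n => by congr 1; push_cast; ring

lemma tsum_gpdf_bound {σ b : ℝ} (hσ : 0 < σ) (hb : 0 < b) :
    ∃ M : ℝ, ∀ x : ℝ, (∑' k : ℤ, gpdf σ (x - b * k)) ≤ M := by
  classical
  set h : ℤ → ℝ := fun k => if k = 0 then gpdf σ 0 else gpdf σ (b * (((|k| : ℤ) : ℝ) - 1))
    with hh
  have hsum : Summable h := by
    apply Summable.of_nat_of_neg
    · refine (summable_nat_add_iff 1).mp ?_
      refine (summable_gpdf_nat (c := 0) (d := b) hσ hb.ne').congr fun n => ?_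
      have hne : ((n : ℤ) + 1 : ℤ) ≠ 0 := by positivity
      simp only [hh]
      push_cast [abs_of_nonneg (by positivity : (0:ℤ) ≤ (n : ℤ) + 1), hne, if_neg]
      congr 1
      ring
    · refine (summable_nat_add_iff 1).mp ?_
      refine (summable_gpdf_nat (c := 0) (d := b) hσ hb.ne').congr fun n => ?_
      have hpos : (0:ℤ) < (n : ℤ) + 1 := by positivity
      have hne : (-((n : ℤ) + 1) : ℤ) ≠ 0 := neg_ne_zero.mpr hpos.ne'
      simp only [hh, abs_neg]
      push_cast [abs_of_nonneg hpos.le, hne, if_neg]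
      congr 1
      ring
  refine ⟨∑' k, h k, fun x => ?_⟩
  set n : ℤ := ⌊x / b⌋ with hn
  set x' : ℝ := x - b * n with hx'
  have hfr : x' = b * Int.fract (x / b) := by
    rw [hx', Int.fract, hn]
    field_simp
  have hx'0 : 0 ≤ x' := by
    rw [hfr]; exact mul_nonneg hb.le (Int.fract_nonneg _)
  have hx'b : x' < b := by
    rw [hfr]
    calc b * Int.fract (x / b) < b * 1 := by
          exact mul_lt_mul_of_pos_left (Int.fract_lt_one _) hb
      _ = b := mul_one b
  have hre : (∑' k : ℤ, gpdf σ (x - b * k)) = ∑' k : ℤ, gpdf σ (x' - b * k) := by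
    rw [← Equiv.tsum_eq (Equiv.addRight n) (fun k => gpdf σ (x - b * k))]
    refine tsum_congr fun k => ?_
    simp only [Equiv.coe_addRight]
    congr 1
    push_cast
    rw [hx']
    ring
  rw [hre]
  refine Summable.tsum_le_tsum (fun k => ?_) (summable_gpdf_int hσ hb x') hsum
  rcases eq_or_ne k 0 with rfl | hk
  · simp only [hh, if_pos rfl]
    refine gpdf_anti hσ ?_
    simp only [Int.cast_zero, mul_zero, sub_zero, abs_zero]
    exact abs_nonneg x'
  · simp only [hh, if_neg hk]
    refine gpdf_anti hσ ?_
    have h1k : (1 : ℝ) ≤ ((|k| : ℤ) : ℝ) := by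
      exact_mod_cast Int.one_le_abs hk
    have habs1 : |b * (((|k| : ℤ) : ℝ) - 1)| = b * (((|k| : ℤ) : ℝ) - 1) := by
      apply abs_of_nonneg; nlinarith
    have habs2 : |(b : ℝ) * k| - |x'| ≤ |x' - b * k| := by
      rw [abs_sub_comm x' ((b:ℝ) * k)]; exact abs_sub_abs_le_abs_sub _ _
    have habs3 : |(b : ℝ) * k| = b * ((|k| : ℤ) : ℝ) := by
      rw [abs_mul, abs_of_pos hb, Int.cast_abs]
    rw [habs1]
    rw [habs3] at habs2
    rw [abs_of_nonneg hx'0] at habs2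
    linarith

lemma flatness_nonneg (b σ : ℝ) : 0 ≤ flatness b σ :=
  Real.iSup_nonneg fun x => abs_nonneg _

lemma abs_le_flatness {σ b : ℝ} (hσ : 0 < σ) (hb : 0 < b) (x : ℝ) :
    |b * (∑' k : ℤ, gpdf σ (x - b * k)) - 1| ≤ flatness b σ := by
  obtain ⟨M, hM⟩ := tsum_gpdf_bound hσ hb
  refine le_ciSup (f := fun x => |b * (∑' k : ℤ, gpdf σ (x - b * k)) - 1|) ⟨b * M + 1, ?_⟩ x
  rintro _ ⟨y, rfl⟩
  have h1 : 0 ≤ ∑' k : ℤ, gpdf σ (y - b * k) := tsum_nonneg fun k => gpdf_nonneg hσ.le _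
  have h2 := hM y
  calc |b * (∑' k : ℤ, gpdf σ (y - b * k)) - 1| ≤ |b * (∑' k : ℤ, gpdf σ (y - b * k))| + |1| :=
        abs_sub _ _
    _ ≤ b * M + 1 := by
        rw [abs_one, abs_of_nonneg (by positivity)]
        have := mul_le_mul_of_nonneg_left h2 hb.le
        linarith

lemma continuous_gpdf (σ : ℝ) : Continuous (gpdf σ) := by
  unfold gpdf
  exact continuous_const.mul (((continuous_pow 2).neg.div_const _).rexp)

lemma integrable_gpdf {σ : ℝ} (hσ : 0 < σ) : Integrable (gpdf σ) := by
  have h : (fun x => (1 / (Real.sqrt (2 * Real.pi) * σ)) *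
      Real.exp (-(1/(2*σ^2)) * x ^ 2)) = gpdf σ := by
    ext x; unfold gpdf; congr 1; ring_nf
  rw [← h]
  exact (integrable_exp_neg_mul_sq (by positivity)).const_mul _

lemma integral_gpdf {σ : ℝ} (hσ : 0 < σ) : ∫ x, gpdf σ x = 1 := by
  have h : ∀ x : ℝ, gpdf σ x = (1 / (Real.sqrt (2 * Real.pi) * σ)) *
      Real.exp (-(1/(2*σ^2)) * x ^ 2) := by
    intro x; unfold gpdf; congr 1; ring_nf
  simp_rw [h]
  rw [MeasureTheory.integral_const_mul, integral_gaussian]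
  have h1 : Real.pi / (1/(2*σ^2)) = 2 * Real.pi * σ^2 := by field_simp
  rw [h1, show 2*Real.pi*σ^2 = (2*Real.pi)*σ^2 by ring,
    Real.sqrt_mul (by positivity : (0:ℝ) ≤ 2*Real.pi) (σ^2), Real.sqrt_sq hσ.le]
  have h2 : Real.sqrt (2*Real.pi) ≠ 0 := by positivity
  field_simp

lemma gpdf_conv {s r : ℝ} (hs : 0 < s) (hr : 0 < r) (a : ℝ) :
    ∫ t, gpdf s t * gpdf r (a - t) = gpdf (Real.sqrt (s^2 + r^2)) a := by
  set v : ℝ := s^2 + r^2 with hv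
  have hvpos : 0 < v := by positivity
  set α : ℝ := v / (2*s^2*r^2) with hα
  have hαpos : 0 < α := by positivity
  set m : ℝ := a * s^2 / v with hm
  set K : ℝ := (1/(2*Real.pi*(s*r))) * Real.exp (-(a^2)/(2*v)) with hK
  have hpt : ∀ t : ℝ, gpdf s t * gpdf r (a - t) = K * Real.exp (-α*(t-m)^2) := by
    intro t
    unfold gpdf
    have hc : (1/(Real.sqrt (2*Real.pi)*s)) * (1/(Real.sqrt (2*Real.pi)*r))
        = 1/(2*Real.pi*(s*r)) := by
      rw [div_mul_div_comm, one_mul]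
      congr 1
      rw [mul_mul_mul_comm, Real.mul_self_sqrt (by positivity)]
    have he : (-(t^2)/(2*s^2)) + (-((a-t)^2)/(2*r^2)) = -(a^2)/(2*v) + (-α*(t-m)^2) := by
      rw [hα, hm, hv]
      field_simp
      ring
    calc (1/(Real.sqrt (2*Real.pi)*s)) * Real.exp (-(t^2)/(2*s^2)) *
          ((1/(Real.sqrt (2*Real.pi)*r)) * Real.exp (-((a-t)^2)/(2*r^2)))
        = ((1/(Real.sqrt (2*Real.pi)*s)) * (1/(Real.sqrt (2*Real.pi)*r))) *
          Real.exp ((-(t^2)/(2*s^2)) + (-((a-t)^2)/(2*r^2))) := by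
          rw [Real.exp_add]; ring
      _ = (1/(2*Real.pi*(s*r))) * Real.exp (-(a^2)/(2*v) + (-α*(t-m)^2)) := by rw [hc, he]
      _ = K * Real.exp (-α*(t-m)^2) := by rw [Real.exp_add, hK]; ring
  calc ∫ t, gpdf s t * gpdf r (a - t) = ∫ t, K * Real.exp (-α*(t-m)^2) := by simp_rw [hpt]
    _ = K * ∫ t, Real.exp (-α*(t-m)^2) := MeasureTheory.integral_const_mul _ _
    _ = K * ∫ t, Real.exp (-α*t^2) := by
        rw [integral_sub_right_eq_self (μ := volume) (fun u => Real.exp (-α*u^2)) m]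
    _ = K * Real.sqrt (Real.pi / α) := by rw [integral_gaussian]
    _ = gpdf (Real.sqrt v) a := by
        have h1 : Real.pi / α = (2*Real.pi) * ((s*r)^2 * v⁻¹) := by
          rw [hα]; field_simp
        rw [h1, Real.sqrt_mul (by positivity : (0:ℝ) ≤ 2*Real.pi) ((s*r)^2 * v⁻¹),
          Real.sqrt_mul (sq_nonneg (s*r)) v⁻¹, Real.sqrt_inv,
          Real.sqrt_sq (by positivity : (0:ℝ) ≤ s*r)]
        unfold gpdf
        rw [Real.sq_sqrt hvpos.le, hK]
        have h2 : Real.sqrt (2*Real.pi) ≠ 0 := by positivity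
        have h3 : Real.sqrt v ≠ 0 := by positivity
        have h4 : Real.sqrt (2*Real.pi) * Real.sqrt (2*Real.pi) = 2*Real.pi :=
          Real.mul_self_sqrt (by positivity)
        have h5 : Real.pi ≠ 0 := Real.pi_ne_zero
        have h6 : Real.sqrt 2 ^ 2 = 2 := Real.sq_sqrt (by norm_num)
        have h7 : Real.sqrt Real.pi ^ 2 = Real.pi := Real.sq_sqrt Real.pi_pos.le
        have h8 : Real.sqrt (2*Real.pi) ^ 2 = 2*Real.pi := Real.sq_sqrt (by positivity)
        have h9 : Real.sqrt 2 * Real.sqrt Real.pi * (Real.sqrt 2 * Real.sqrt Real.pi)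
            = 2 * Real.pi := by
          nlinarith [h6, h7]
        field_simp
        linear_combination h8

lemma key_identity {ρ : ℝ} (hρ0 : 0 < ρ) (hρ1 : ρ < 1) (x y a : ℝ) :
    gpdf (Real.sqrt ρ) a * gpdf (Real.sqrt (1-ρ)) (x-a) * gpdf (Real.sqrt (1-ρ)) (y-a)
      = fXY ρ x y * gpdf (Real.sqrt (ρ*(1-ρ)/(1+ρ))) (a - ρ*(x+y)/(1+ρ)) := by
  have h1m : (0:ℝ) < 1 - ρ := by linarith
  have h1p : (0:ℝ) < 1 + ρ := by linarith
  have hsρ : Real.sqrt ρ ≠ 0 := by positivity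
  have hs1m : Real.sqrt (1-ρ) ≠ 0 := by positivity
  have hs1p : Real.sqrt (1+ρ) ≠ 0 := by positivity
  have hs2π : Real.sqrt (2*Real.pi) ≠ 0 := by positivity
  have h4 : Real.sqrt (2*Real.pi) * Real.sqrt (2*Real.pi) = 2*Real.pi :=
    Real.mul_self_sqrt (by positivity)
  have hρs : Real.sqrt ρ * Real.sqrt ρ = ρ := Real.mul_self_sqrt hρ0.le
  have h1ms : Real.sqrt (1-ρ) * Real.sqrt (1-ρ) = 1-ρ := Real.mul_self_sqrt h1m.le
  have h1ps : Real.sqrt (1+ρ) * Real.sqrt (1+ρ) = 1+ρ := Real.mul_self_sqrt h1p.le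
  have hst : Real.sqrt (ρ*(1-ρ)/(1+ρ)) = Real.sqrt ρ * Real.sqrt (1-ρ) / Real.sqrt (1+ρ) := by
    rw [show ρ*(1-ρ)/(1+ρ) = (ρ*(1-ρ))*(1+ρ)⁻¹ by ring, Real.sqrt_mul (by positivity),
      Real.sqrt_inv, Real.sqrt_mul hρ0.le, div_eq_mul_inv]
  have hsq : Real.sqrt (1 - ρ^2) = Real.sqrt (1-ρ) * Real.sqrt (1+ρ) := by
    rw [show (1:ℝ) - ρ^2 = (1-ρ)*(1+ρ) by ring, Real.sqrt_mul h1m.le]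
  unfold gpdf fXY
  rw [hst, hsq, Real.sq_sqrt hρ0.le, Real.sq_sqrt h1m.le]
  have hstsq : (Real.sqrt ρ * Real.sqrt (1-ρ) / Real.sqrt (1+ρ))^2 = ρ*(1-ρ)/(1+ρ) := by
    rw [div_pow, mul_pow, sq, sq, sq, hρs, h1ms, h1ps]
  rw [hstsq]
  have hC : (1/(Real.sqrt (2*Real.pi)*Real.sqrt ρ)) * (1/(Real.sqrt (2*Real.pi)*Real.sqrt (1-ρ)))
      * (1/(Real.sqrt (2*Real.pi)*Real.sqrt (1-ρ)))
      = (1/(2*Real.pi*(Real.sqrt (1-ρ)*Real.sqrt (1+ρ))))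
        * (1/(Real.sqrt (2*Real.pi)*(Real.sqrt ρ * Real.sqrt (1-ρ) / Real.sqrt (1+ρ)))) := by
    have h2q : Real.sqrt 2 ^ 2 = 2 := Real.sq_sqrt (by norm_num)
    have hπ2 : Real.sqrt Real.pi ^ 2 = Real.pi := Real.sq_sqrt Real.pi_pos.le
    field_simp
    linear_combination (-1:ℝ) * h4
  have hE : -(a^2)/(2*ρ) + (-((x-a)^2)/(2*(1-ρ)) + (-((y-a)^2)/(2*(1-ρ))))
      = -(x^2+y^2-2*ρ*x*y)/(2*(1-ρ^2))
        + (-((a - ρ*(x+y)/(1+ρ))^2)/(2*(ρ*(1-ρ)/(1+ρ)))) := by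
    have hne : (1:ℝ) - ρ^2 ≠ 0 := by nlinarith
    field_simp
    ring
  calc (1/(Real.sqrt (2*Real.pi)*Real.sqrt ρ)) * Real.exp (-(a^2)/(2*ρ))
        * ((1/(Real.sqrt (2*Real.pi)*Real.sqrt (1-ρ))) * Real.exp (-((x-a)^2)/(2*(1-ρ))))
        * ((1/(Real.sqrt (2*Real.pi)*Real.sqrt (1-ρ))) * Real.exp (-((y-a)^2)/(2*(1-ρ))))
      = ((1/(Real.sqrt (2*Real.pi)*Real.sqrt ρ)) * (1/(Real.sqrt (2*Real.pi)*Real.sqrt (1-ρ)))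
        * (1/(Real.sqrt (2*Real.pi)*Real.sqrt (1-ρ))))
        * Real.exp (-(a^2)/(2*ρ) + (-((x-a)^2)/(2*(1-ρ)) + (-((y-a)^2)/(2*(1-ρ))))) := by
        rw [Real.exp_add, Real.exp_add]; ring
    _ = ((1/(2*Real.pi*(Real.sqrt (1-ρ)*Real.sqrt (1+ρ))))
        * (1/(Real.sqrt (2*Real.pi)*(Real.sqrt ρ * Real.sqrt (1-ρ) / Real.sqrt (1+ρ)))))
        * Real.exp (-(x^2+y^2-2*ρ*x*y)/(2*(1-ρ^2))
          + (-((a - ρ*(x+y)/(1+ρ))^2)/(2*(ρ*(1-ρ)/(1+ρ))))) := by rw [hC, hE]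
    _ = (1/(2*Real.pi*(Real.sqrt (1-ρ)*Real.sqrt (1+ρ))))
        * Real.exp (-(x^2+y^2-2*ρ*x*y)/(2*(1-ρ^2)))
        * ((1/(Real.sqrt (2*Real.pi)*(Real.sqrt ρ * Real.sqrt (1-ρ) / Real.sqrt (1+ρ))))
        * Real.exp (-((a - ρ*(x+y)/(1+ρ))^2)/(2*(ρ*(1-ρ)/(1+ρ))))) := by
        rw [Real.exp_add]; ring

lemma S_bounds {ρ b : ℝ} (hb : 0 < b) (hρ0 : 0 < ρ) (hρ1 : ρ < 1) :
    1 - flatness b (Real.sqrt (ρ*(1-ρ)/(1+ρ))) ≤ b * ∑' j : ℤ, gpdf (Real.sqrt ρ) (b*j) ∧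
    b * (∑' j : ℤ, gpdf (Real.sqrt ρ) (b*j)) ≤ 1 + flatness b (Real.sqrt (ρ*(1-ρ)/(1+ρ))) := by
  have h1m : (0:ℝ) < 1 - ρ := by linarith
  have h1p : (0:ℝ) < 1 + ρ := by linarith
  set st : ℝ := Real.sqrt (ρ*(1-ρ)/(1+ρ)) with hstdef
  set s2 : ℝ := Real.sqrt (2*ρ^2/(1+ρ)) with hs2def
  have hst : 0 < st := Real.sqrt_pos.mpr (by positivity)
  have hs2 : 0 < s2 := Real.sqrt_pos.mpr (by positivity)
  have hsρ : 0 < Real.sqrt ρ := Real.sqrt_pos.mpr hρ0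
  set ε : ℝ := flatness b st with hε
  have hεnn : 0 ≤ ε := flatness_nonneg b st
  have htheta : ∀ t : ℝ, 1 - ε ≤ b * ∑' k : ℤ, gpdf st (t - b*k) ∧
      b * (∑' k : ℤ, gpdf st (t - b*k)) ≤ 1 + ε := by
    intro t
    have := abs_le.mp (abs_le_flatness hst hb t)
    constructor <;> linarith [this.1, this.2]
  have heven : ∀ c u : ℝ, gpdf st (u - c) = gpdf st (c - u) := by
    intro c u; rw [← gpdf_neg, neg_sub]
  have hconv : ∀ j : ℤ, gpdf (Real.sqrt ρ) (b*j) = ∫ t, gpdf s2 t * gpdf st (b*j - t) := by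
    intro j
    rw [gpdf_conv hs2 hst]
    congr 2
    rw [hstdef, hs2def, Real.sq_sqrt (by positivity), Real.sq_sqrt (by positivity)]
    field_simp
    ring
  have hsummable : Summable (fun j : ℤ => gpdf (Real.sqrt ρ) (b*j)) :=
    (summable_gpdf_int hsρ hb 0).congr fun j => by rw [zero_sub, gpdf_neg]
  have hint : ∀ j : ℤ, Integrable (fun t => gpdf s2 t * gpdf st (b*j - t)) := by
    intro j
    refine Integrable.mono' ((integrable_gpdf hs2).const_mul (gpdf st 0))
      (((continuous_gpdf s2).mul
        ((continuous_gpdf st).comp (continuous_const.sub continuous_id))).aestronglyMeasurable)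
      (ae_of_all _ fun t => ?_)
    rw [Real.norm_eq_abs, abs_of_nonneg (mul_nonneg (gpdf_nonneg hs2.le _) (gpdf_nonneg hst.le _))]
    have h1 : gpdf st (b*j - t) ≤ gpdf st 0 := gpdf_anti hst (by simp)
    calc gpdf s2 t * gpdf st (b*j - t) ≤ gpdf s2 t * gpdf st 0 :=
          mul_le_mul_of_nonneg_left h1 (gpdf_nonneg hs2.le t)
      _ = gpdf st 0 * gpdf s2 t := mul_comm _ _
  have hmeas : ∀ j : ℤ, AEMeasurable (fun t => ENNReal.ofReal (gpdf s2 t * gpdf st (b*j - t)))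
      (volume : Measure ℝ) := by
    intro j
    exact (((continuous_gpdf s2).mul
      ((continuous_gpdf st).comp (continuous_const.sub continuous_id))).measurable.ennreal_ofReal).aemeasurable
  set S : ℝ := ∑' j : ℤ, gpdf (Real.sqrt ρ) (b*j) with hS
  have hSnn : 0 ≤ S := tsum_nonneg fun j => gpdf_nonneg hsρ.le _
  have key : ENNReal.ofReal S
      = ∫⁻ t, ENNReal.ofReal (gpdf s2 t) * ENNReal.ofReal (∑' k : ℤ, gpdf st (t - b*k)) := by
    rw [hS, ENNReal.ofReal_tsum_of_nonneg (fun j => gpdf_nonneg hsρ.le _) hsummable]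
    have h1 : ∀ j : ℤ, ENNReal.ofReal (gpdf (Real.sqrt ρ) (b*j))
        = ∫⁻ t, ENNReal.ofReal (gpdf s2 t * gpdf st (b*j - t)) := by
      intro j
      rw [hconv j, ofReal_integral_eq_lintegral_ofReal (hint j)
        (ae_of_all _ fun t => mul_nonneg (gpdf_nonneg hs2.le _) (gpdf_nonneg hst.le _))]
    simp_rw [h1]
    rw [← lintegral_tsum hmeas]
    congr 1
    funext t
    have h2 : ∀ k : ℤ, ENNReal.ofReal (gpdf s2 t * gpdf st (b*k - t))
        = ENNReal.ofReal (gpdf s2 t) * ENNReal.ofReal (gpdf st (b*k - t)) := fun k =>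
      ENNReal.ofReal_mul (gpdf_nonneg hs2.le _)
    simp_rw [h2]
    rw [ENNReal.tsum_mul_left]
    congr 1
    rw [← ENNReal.ofReal_tsum_of_nonneg (fun k => gpdf_nonneg hst.le _)
      ((summable_gpdf_int hst hb t).congr fun k => (heven _ _))]
    congr 1
    exact tsum_congr fun k => (heven _ _).symm
  have hone : (∫⁻ t, ENNReal.ofReal (gpdf s2 t)) = 1 := by
    rw [← ofReal_integral_eq_lintegral_ofReal (integrable_gpdf hs2)
      (ae_of_all _ fun t => gpdf_nonneg hs2.le t), integral_gpdf hs2, ENNReal.ofReal_one]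
  have hub : S ≤ (1 + ε)/b := by
    have h3 : ENNReal.ofReal S ≤ ENNReal.ofReal ((1+ε)/b) := by
      rw [key]
      calc ∫⁻ t, ENNReal.ofReal (gpdf s2 t) * ENNReal.ofReal (∑' k : ℤ, gpdf st (t - b*k))
          ≤ ∫⁻ t, ENNReal.ofReal ((1+ε)/b) * ENNReal.ofReal (gpdf s2 t) := by
            refine lintegral_mono fun t => ?_
            rw [mul_comm]
            refine mul_le_mul_left (ENNReal.ofReal_le_ofReal ?_) _
            rw [le_div_iff₀ hb]
            linarith [htheta t |>.2]
        _ = ENNReal.ofReal ((1+ε)/b) * ∫⁻ t, ENNReal.ofReal (gpdf s2 t) :=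
            lintegral_const_mul' _ _ ENNReal.ofReal_ne_top
        _ = ENNReal.ofReal ((1+ε)/b) := by rw [hone, mul_one]
    exact (ENNReal.ofReal_le_ofReal_iff (by positivity)).mp h3
  have hlb : (1 - ε)/b ≤ S := by
    have h3 : ENNReal.ofReal ((1-ε)/b) ≤ ENNReal.ofReal S := by
      rw [key]
      calc ENNReal.ofReal ((1-ε)/b)
          = ENNReal.ofReal ((1-ε)/b) * ∫⁻ t, ENNReal.ofReal (gpdf s2 t) := by rw [hone, mul_one]
        _ = ∫⁻ t, ENNReal.ofReal ((1-ε)/b) * ENNReal.ofReal (gpdf s2 t) :=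
            (lintegral_const_mul' _ _ ENNReal.ofReal_ne_top).symm
        _ ≤ ∫⁻ t, ENNReal.ofReal (gpdf s2 t) * ENNReal.ofReal (∑' k : ℤ, gpdf st (t - b*k)) := by
            refine lintegral_mono fun t => ?_
            rw [mul_comm]
            refine mul_le_mul_right (ENNReal.ofReal_le_ofReal ?_) _
            rw [div_le_iff₀ hb]
            linarith [htheta t |>.1]
    exact (ENNReal.ofReal_le_ofReal_iff hSnn).mp h3
  constructor
  · have := mul_le_mul_of_nonneg_left hlb hb.le
    rw [mul_div_cancel₀ _ hb.ne'] at this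
    linarith
  · have := mul_le_mul_of_nonneg_left hub hb.le
    rw [mul_div_cancel₀ _ hb.ne'] at this
    linarith

end helper

/-- if the flatness factor `ε = ε_Λ(√(ρ(1-ρ)/(1+ρ))) < 1/2`, then the mixture
density is sandwiched: `(1-2ε) f_{X,Y} ≤ f_{X̄,Ȳ} ≤ (1+4ε) f_{X,Y}` pointwise. -/
theorem mixture_density_sandwich (ρ b : ℝ) (hb : 0 < b) (hρ0 : 0 < ρ) (hρ1 : ρ < 1)
    (hε : flatness b (Real.sqrt (ρ * (1 - ρ) / (1 + ρ))) < 1 / 2) :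
    ∀ x y : ℝ,
      (1 - 2 * flatness b (Real.sqrt (ρ * (1 - ρ) / (1 + ρ)))) * fXY ρ x y ≤
          fXbarYbar ρ b x y ∧
        fXbarYbar ρ b x y ≤
          (1 + 4 * flatness b (Real.sqrt (ρ * (1 - ρ) / (1 + ρ)))) * fXY ρ x y := by
  intro x y
  have h1m : (0:ℝ) < 1 - ρ := by linarith
  have h1p : (0:ℝ) < 1 + ρ := by linarith
  set st : ℝ := Real.sqrt (ρ * (1 - ρ) / (1 + ρ)) with hstdef
  have hst : 0 < st := Real.sqrt_pos.mpr (by positivity)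
  have hsρ : 0 < Real.sqrt ρ := Real.sqrt_pos.mpr hρ0
  set ε : ℝ := flatness b st with hεdef
  have hεnn : 0 ≤ ε := flatness_nonneg b st
  set S : ℝ := ∑' j : ℤ, gpdf (Real.sqrt ρ) (b * j) with hSdef
  obtain ⟨hSl, hSu⟩ := S_bounds hb hρ0 hρ1
  have hBpos : 0 < b * S := lt_of_lt_of_le (by linarith) hSl
  set c : ℝ := ρ * (x + y) / (1 + ρ) with hcdef
  have heven : ∀ u : ℝ, gpdf st (u - c) = gpdf st (c - u) := by
    intro u; rw [← gpdf_neg, neg_sub]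
  set A : ℝ := b * ∑' k : ℤ, gpdf st (c - b * k) with hAdef
  have hA := abs_le.mp (abs_le_flatness hst hb c)
  have hfXYnn : 0 ≤ fXY ρ x y := by
    unfold fXY
    positivity
  have hrw : fXbarYbar ρ b x y = fXY ρ x y * A / (b * S) := by
    unfold fXbarYbar dgauss
    calc ∑' k : ℤ, gpdf (Real.sqrt ρ) (b * k) / (∑' j : ℤ, gpdf (Real.sqrt ρ) (b * j)) *
          gpdf (Real.sqrt (1 - ρ)) (x - b * k) * gpdf (Real.sqrt (1 - ρ)) (y - b * k)
        = ∑' k : ℤ, fXY ρ x y * gpdf st (b * k - c) / S := by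
          refine tsum_congr fun k => ?_
          rw [div_mul_eq_mul_div, div_mul_eq_mul_div, key_identity hρ0 hρ1 x y (b * k)]
      _ = (∑' k : ℤ, fXY ρ x y * gpdf st (b * k - c)) / S := by
          rw [tsum_div_const]
      _ = fXY ρ x y * (∑' k : ℤ, gpdf st (b * k - c)) / S := by rw [tsum_mul_left]
      _ = fXY ρ x y * (∑' k : ℤ, gpdf st (c - b * k)) / S := by
          have h : (∑' k : ℤ, gpdf st (b * (k:ℝ) - c)) = ∑' k : ℤ, gpdf st (c - b * (k:ℝ)) :=
            tsum_congr fun k => heven _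
          rw [h]
      _ = fXY ρ x y * A / (b * S) := by
          rw [hAdef, mul_div_assoc, mul_div_assoc]
          congr 1
          rw [mul_comm b (∑' k : ℤ, gpdf st (c - b * k)), mul_comm b S,
            mul_div_mul_right _ _ hb.ne']
  rw [hrw]
  have hS0 : S ≠ 0 := right_ne_zero_of_mul hBpos.ne'
  have hA1 : 1 - ε ≤ A := by linarith [hA.1]
  have hA2 : A ≤ 1 + ε := by linarith [hA.2]
  constructor
  · have h1 : (1 - 2*ε) * (b * S) ≤ A := by nlinarith [mul_nonneg hεnn hεnn]
    calc (1 - 2*ε) * fXY ρ x y = fXY ρ x y * ((1 - 2*ε) * (b * S)) / (b * S) := by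
          field_simp
      _ ≤ fXY ρ x y * A / (b * S) :=
          div_le_div_of_nonneg_right (mul_le_mul_of_nonneg_left h1 hfXYnn) hBpos.le
  · have h2 : A ≤ (1 + 4*ε) * (b * S) := by nlinarith [mul_nonneg hεnn hεnn]
    calc fXY ρ x y * A / (b * S) ≤ fXY ρ x y * ((1 + 4*ε) * (b * S)) / (b * S) :=
          div_le_div_of_nonneg_right (mul_le_mul_of_nonneg_left h2 hfXYnn) hBpos.le
      _ = (1 + 4*ε) * fXY ρ x y := by
          field_simp
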